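/- arXiv:2509.12522 — 2 statements merged into one kernel-verified Lean document; each statement's English description precedes it below -/
import Mathlib

section
/- Let N ≥ 1, let α ∈ (0, 1) satisfy ⌈(N+1)(1−α)⌉ ≤ N, and let S_1, …, S_N, S_{N+1} be real-valued random variables that are exchangeable and almost surely pairwise distinct. Define the conformal quantile q_α = S_{(⌈(N+1)(1−α)⌉)}, the ⌈(N+1)(1−α)⌉-th smallest of the calibration scores S_1, …, S_N. Then ℙ(S_{N+1} ≤ q_α) = ⌈(N+1)(1−α)⌉/(N+1). -/
open MeasureTheory

/-- The `k`-th smallest value (k = 1, …, m) among `v 0, …, v (m-1)`. -/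
noncomputable def orderStat {m : ℕ} (v : Fin m → ℝ) (k : ℕ) : ℝ :=
  ((List.ofFn v).insertionSort (· ≤ ·)).getD (k - 1) 0

lemma sorted_countP_le_iff {L : List ℝ} (hs : L.Pairwise (· ≤ ·)) {j : ℕ} (hj : j < L.length) (t : ℝ) :
    L.countP (fun x => decide (x < t)) ≤ j ↔ t ≤ L[j] := by
  have hsort : ∀ (a b : ℕ) (ha : a < L.length) (hb : b < L.length), a ≤ b → L[a] ≤ L[b] := by
    intro a b ha hb hab
    exact hs.rel_get_of_le (a := ⟨a, ha⟩) (b := ⟨b, hb⟩) hab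
  constructor
  · intro h
    by_contra hlt
    push_neg at hlt
    have h1 : (L.take (j+1)).countP (fun x => decide (x < t)) = (L.take (j+1)).length := by
      rw [List.countP_eq_length]
      intro a ha
      rw [List.mem_iff_getElem] at ha
      obtain ⟨n, hn, rfl⟩ := ha
      have hn' : n < L.length := lt_of_lt_of_le hn (by rw [List.length_take]; omega)
      rw [List.getElem_take]
      have hle : L[n] ≤ L[j] := by
        apply hsort _ _ hn' hj
        have := List.length_take (i := j+1) (l := L)
        omega
      simp only [decide_eq_true_eq]
      exact lt_of_le_of_lt hle hlt
    have h2 : L.countP (fun x => decide (x < t)) =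
        (L.take (j+1)).countP (fun x => decide (x < t))
          + (L.drop (j+1)).countP (fun x => decide (x < t)) := by
      conv_lhs => rw [← List.take_append_drop (j+1) L]
      exact List.countP_append
    rw [h2, h1] at h
    have : (L.take (j+1)).length = j+1 := by rw [List.length_take]; omega
    omega
  · intro h
    have h0 : (L.drop j).countP (fun x => decide (x < t)) = 0 := by
      rw [List.countP_eq_zero]
      intro a ha
      rw [List.mem_iff_getElem] at ha
      obtain ⟨n, hn, rfl⟩ := ha
      rw [List.getElem_drop]
      simp only [decide_eq_true_eq, not_lt]
      refine le_trans h (hsort j (j+n) hj (by rw [List.length_drop] at hn; omega) (by omega))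
    have h2 : L.countP (fun x => decide (x < t)) =
        (L.take j).countP (fun x => decide (x < t))
          + (L.drop j).countP (fun x => decide (x < t)) := by
      conv_lhs => rw [← List.take_append_drop j L]
      exact List.countP_append
    rw [h2, h0]
    have := List.countP_le_length (p := fun x => decide (x < t)) (l := L.take j)
    rw [List.length_take] at this
    omega

lemma countP_ofFn_eq {m : ℕ} (v : Fin m → ℝ) (p : ℝ → Bool) :
    (List.ofFn v).countP p = (Finset.univ.filter (fun i => p (v i))).card := by
  rw [List.ofFn_eq_map, List.countP_map]
  have h1 : (Finset.univ.filter (fun i => p (v i))).card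
      = Multiset.countP (fun i => p (v i) = true) Finset.univ.val := by
    rw [Multiset.countP_eq_card_filter]; rfl
  have h2 : (Finset.univ : Finset (Fin m)).val = ↑(List.finRange m) := by
    rw [Fin.univ_def]
  rw [h1, h2, Multiset.coe_countP]
  congr 1; funext b; simp

lemma le_orderStat_iff {m : ℕ} (v : Fin m → ℝ) (t : ℝ) {k : ℕ} (hk1 : 1 ≤ k) (hkm : k ≤ m) :
    (t ≤ orderStat v k ↔ (Finset.univ.filter (fun i => v i < t)).card < k) := by
  have hlen : ((List.ofFn v).insertionSort (· ≤ ·)).length = m := by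
    rw [List.length_insertionSort, List.length_ofFn]
  have hj : k - 1 < ((List.ofFn v).insertionSort (· ≤ ·)).length := by omega
  have hOS : orderStat v k = ((List.ofFn v).insertionSort (· ≤ ·))[k-1] :=
    List.getD_eq_getElem _ _ hj
  have key := sorted_countP_le_iff (List.pairwise_insertionSort (· ≤ ·) (List.ofFn v)) hj t
  have hc : ((List.ofFn v).insertionSort (· ≤ ·)).countP (fun x => decide (x < t))
      = (Finset.univ.filter (fun i => v i < t)).card := by
    rw [(List.perm_insertionSort _ _).countP_eq, countP_ofFn_eq]
    simp
  rw [hOS, ← key, hc]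
  omega

lemma rank_lt_rank {ι : Type*} [Fintype ι] [DecidableEq ι] (w : ι → ℝ) {a b : ι}
    (hab : w a < w b) :
    (Finset.univ.filter (fun i => w i < w a)).card
      < (Finset.univ.filter (fun i => w i < w b)).card := by
  apply Finset.card_lt_card
  have hsub : (Finset.univ.filter (fun i => w i < w a))
      ⊆ (Finset.univ.filter (fun i => w i < w b)) := by
    intro i hi
    simp only [Finset.mem_filter, Finset.mem_univ, true_and] at hi ⊢
    exact hi.trans hab
  rw [Finset.ssubset_iff_of_subset hsub]
  exact ⟨a, by simp [hab], by simp⟩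

/-- For exchangeable, a.s. pairwise distinct scores
`S 0, …, S N` (calibration scores `S 0, …, S (N-1)` and test score `S (Fin.last N)`),
with `α ∈ (0,1)` such that `⌈(N+1)(1-α)⌉ ≤ N`, the conformal quantile
`q_α = S_(⌈(N+1)(1-α)⌉)` (order statistic of the calibration scores) satisfies
`ℙ(S_{N+1} ≤ q_α) = ⌈(N+1)(1-α)⌉ / (N+1)`. -/
theorem prob_le_conformal_quantile
    {Ω : Type*} [MeasurableSpace Ω] (P : Measure Ω) [IsProbabilityMeasure P]
    (N : ℕ) (hN : 1 ≤ N) (α : ℝ) (hα0 : 0 < α) (hα1 : α < 1)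
    (hk : ⌈((N : ℝ) + 1) * (1 - α)⌉ ≤ (N : ℤ))
    (S : Fin (N + 1) → Ω → ℝ)
    (hmeas : ∀ i, Measurable (S i))
    (hexch : ∀ π : Equiv.Perm (Fin (N + 1)),
      Measure.map (fun ω => fun i => S (π i) ω) P
        = Measure.map (fun ω => fun i => S i ω) P)
    (hdist : ∀ i j, i ≠ j → P {ω | S i ω = S j ω} = 0) :
    P {ω | S (Fin.last N) ω ≤
        orderStat (fun i : Fin N => S i.castSucc ω) (⌈((N : ℝ) + 1) * (1 - α)⌉).toNat}
      = ((⌈((N : ℝ) + 1) * (1 - α)⌉).toNat : ENNReal) / ((N : ENNReal) + 1) := by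
  set k : ℕ := (⌈((N : ℝ) + 1) * (1 - α)⌉).toNat with hkdef
  have hceil_pos : 0 < ⌈((N : ℝ) + 1) * (1 - α)⌉ := by
    rw [Int.ceil_pos]
    have h1 : (0:ℝ) < (N : ℝ) + 1 := by positivity
    have h2 : (0:ℝ) < 1 - α := by linarith
    positivity
  have hk1 : 1 ≤ k := by omega
  have hkN : k ≤ N := by omega
  -- the rank function
  set C : Fin (N+1) → Ω → ℕ :=
    fun j ω => (Finset.univ.filter (fun i => S i ω < S j ω)).card with hCdef
  -- rewrite the event
  have hEv : {ω | S (Fin.last N) ω ≤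
      orderStat (fun i : Fin N => S i.castSucc ω) k} = {ω | C (Fin.last N) ω < k} := by
    ext ω
    simp only [Set.mem_setOf_eq]
    rw [le_orderStat_iff _ _ hk1 (by omega)]
    have hcard : (Finset.univ.filter (fun i : Fin N => S i.castSucc ω < S (Fin.last N) ω)).card
        = C (Fin.last N) ω := by
      rw [hCdef]
      apply Finset.card_bij (fun i _ => i.castSucc)
      · intro i hi
        simp only [Finset.mem_filter, Finset.mem_univ, true_and] at hi ⊢
        exact hi
      · intro a ha b hb hab
        exact Fin.castSucc_injective _ hab
      · intro x hx
        simp only [Finset.mem_filter, Finset.mem_univ, true_and] at hx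
        rcases Fin.eq_castSucc_or_eq_last x with ⟨i, rfl⟩ | rfl
        · exact ⟨i, by simpa using hx, rfl⟩
        · exact absurd hx (lt_irrefl _)
    rw [hcard]
  rw [hEv]
  -- measurability
  have hCmeas : ∀ j, Measurable (C j) := by
    intro j
    rw [hCdef]
    simp only [Finset.card_filter]
    apply Finset.measurable_sum
    intro i _
    exact Measurable.ite (measurableSet_lt (hmeas i) (hmeas j)) measurable_const measurable_const
  set A : Fin (N+1) → Set Ω := fun j => {ω | C j ω < k} with hAdef
  have hA : ∀ j, MeasurableSet (A j) := by
    intro j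
    show MeasurableSet (C j ⁻¹' {n | n < k})
    exact (hCmeas j) MeasurableSpace.measurableSet_top
  -- exchangeability: all P (A j) coincide
  set T : Ω → (Fin (N+1) → ℝ) := fun ω i => S i ω with hTdef
  have hT : Measurable T := measurable_pi_lambda _ (fun i => hmeas i)
  set f : (Fin (N+1) → ℝ) → ℕ :=
    fun x => (Finset.univ.filter (fun i => x i < x (Fin.last N))).card with hfdef
  have hf : Measurable f := by
    rw [hfdef]
    simp only [Finset.card_filter]
    apply Finset.measurable_sum
    intro i _
    exact Measurable.ite (measurableSet_lt (measurable_pi_apply i) (measurable_pi_apply _))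
      measurable_const measurable_const
  have hB : MeasurableSet {x : Fin (N+1) → ℝ | f x < k} := by
    show MeasurableSet (f ⁻¹' {n | n < k})
    exact hf MeasurableSpace.measurableSet_top
  have hAeq : ∀ j, P (A j) = P (A (Fin.last N)) := by
    intro j
    set π : Equiv.Perm (Fin (N+1)) := Equiv.swap (Fin.last N) j with hπdef
    have hπlast : π (Fin.last N) = j := Equiv.swap_apply_left _ _
    have hTπ : Measurable (fun ω => fun i => S (π i) ω) :=
      measurable_pi_lambda _ (fun i => hmeas (π i))
    have h1 : P ((fun ω => fun i => S (π i) ω) ⁻¹' {x | f x < k}) = P (T ⁻¹' {x | f x < k}) := by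
      rw [← Measure.map_apply hTπ hB, ← Measure.map_apply hT hB, hexch π]
    have h2 : T ⁻¹' {x | f x < k} = A (Fin.last N) := rfl
    have h3 : (fun ω => fun i => S (π i) ω) ⁻¹' {x | f x < k} = A j := by
      ext ω
      simp only [Set.mem_preimage, Set.mem_setOf_eq, hAdef, hfdef, hCdef, hπlast]
      constructor
      · intro h
        have hcard : (Finset.univ.filter (fun i => S (π i) ω < S j ω)).card
            = (Finset.univ.filter (fun i => S i ω < S j ω)).card := by
          apply Finset.card_equiv π
          intro i
          simp
        omega
      · intro h
        have hcard : (Finset.univ.filter (fun i => S (π i) ω < S j ω)).card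
            = (Finset.univ.filter (fun i => S i ω < S j ω)).card := by
          apply Finset.card_equiv π
          intro i
          simp
        omega
    rw [← h3, h1, h2]
  -- a.s. all values distinct
  have hD : ∀ᵐ ω ∂P, ∀ i j : Fin (N+1), i ≠ j → S i ω ≠ S j ω := by
    rw [ae_all_iff]
    intro i
    rw [ae_all_iff]
    intro j
    by_cases hij : i = j
    · filter_upwards with ω h
      exact absurd hij h
    · rw [ae_iff]
      have : {ω | ¬ (i ≠ j → S i ω ≠ S j ω)} = {ω | S i ω = S j ω} := by
        ext ω; simp [hij]
      rw [this]
      exact hdist i j hij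
  -- on the distinct event, the number of j with C j < k is exactly k
  have hcount : ∀ ω, (∀ i j : Fin (N+1), i ≠ j → S i ω ≠ S j ω) →
      (Finset.univ.filter (fun j => C j ω < k)).card = k := by
    intro ω hω
    have hinj : Function.Injective (fun j => C j ω) := by
      intro a b hab
      by_contra hne
      have hvne : S a ω ≠ S b ω := hω a b hne
      rcases lt_or_gt_of_ne hvne with h | h
      · have h2 := rank_lt_rank (fun i => S i ω) h
        simp only [hCdef] at hab
        omega
      · have h2 := rank_lt_rank (fun i => S i ω) h
        simp only [hCdef] at hab
        omega
    have hbound : ∀ j, C j ω < N + 1 := by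
      intro j
      simp only [hCdef]
      have hsub : (Finset.univ.filter (fun i => S i ω < S j ω)) ⊆ Finset.univ.erase j := by
        intro i hi
        simp only [Finset.mem_filter, Finset.mem_univ, true_and] at hi
        simp only [Finset.mem_erase, Finset.mem_univ, and_true]
        intro hij
        rw [hij] at hi
        exact lt_irrefl _ hi
      have := Finset.card_le_card hsub
      rw [Finset.card_erase_of_mem (Finset.mem_univ j), Finset.card_univ, Fintype.card_fin] at this
      omega
    set e : Fin (N+1) → Fin (N+1) := fun j => ⟨C j ω, hbound j⟩ with hedef
    have heinj : Function.Injective e := by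
      intro a b hab
      apply hinj
      simpa [hedef, Fin.mk.injEq] using hab
    have hebij : Function.Bijective e := Finite.injective_iff_bijective.mp heinj
    set E : Fin (N+1) ≃ Fin (N+1) := Equiv.ofBijective e hebij with hEdef
    have hc1 : (Finset.univ.filter (fun j => C j ω < k)).card
        = (Finset.univ.filter (fun m : Fin (N+1) => m.val < k)).card := by
      apply Finset.card_equiv E
      intro i
      simp [hEdef, hedef, Equiv.ofBijective_apply]
    rw [hc1]
    have : (Finset.univ.filter (fun m : Fin (N+1) => m.val < k))
        = Finset.Iio (⟨k, by omega⟩ : Fin (N+1)) := by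
      ext m; simp [Fin.lt_def]
    rw [this, Fin.card_Iio]
  -- sum of probabilities
  have hsum : ∑ j : Fin (N+1), P (A j) = (k : ENNReal) := by
    have h1 : ∀ j : Fin (N+1), P (A j) = ∫⁻ ω, (A j).indicator 1 ω ∂P := by
      intro j
      rw [lintegral_indicator_one (hA j)]
    calc ∑ j : Fin (N+1), P (A j)
        = ∑ j : Fin (N+1), ∫⁻ ω, (A j).indicator 1 ω ∂P := by
          exact Finset.sum_congr rfl (fun j _ => h1 j)
      _ = ∫⁻ ω, ∑ j : Fin (N+1), (A j).indicator 1 ω ∂P := by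
          rw [lintegral_finset_sum]
          intro j _
          exact measurable_const.indicator (hA j)
      _ = ∫⁻ ω, (k : ENNReal) ∂P := by
          apply lintegral_congr_ae
          filter_upwards [hD] with ω hω
          have hc := hcount ω hω
          have : ∑ j : Fin (N+1), (A j).indicator (1 : Ω → ENNReal) ω
              = ((Finset.univ.filter (fun j => C j ω < k)).card : ENNReal) := by
            rw [Finset.card_filter]
            push_cast
            apply Finset.sum_congr rfl
            intro j _
            by_cases hj : ω ∈ A j
            · rw [Set.indicator_of_mem hj]
              simp only [hAdef, Set.mem_setOf_eq] at hj
              simp [hj]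
            · rw [Set.indicator_of_notMem hj]
              simp only [hAdef, Set.mem_setOf_eq] at hj
              simp [hj]
          rw [this, hc]
      _ = (k : ENNReal) := by
          rw [lintegral_const, measure_univ, mul_one]
  -- conclude
  have hconst : ∑ j : Fin (N+1), P (A j) = ((N:ENNReal) + 1) * P (A (Fin.last N)) := by
    rw [Finset.sum_congr rfl (fun j _ => hAeq j), Finset.sum_const, Finset.card_univ,
      Fintype.card_fin, nsmul_eq_mul]
    push_cast
    ring
  rw [hconst] at hsum
  rw [ENNReal.eq_div_iff]
  · exact hsum
  · intro h
    simp at h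
  · intro h
    have h1 : ((N:ENNReal) + 1) ≠ ⊤ := by
      apply ENNReal.add_ne_top.mpr
      exact ⟨ENNReal.natCast_ne_top N, ENNReal.one_ne_top⟩
    exact h1 h
end

section
/- (Conformal error bound, Theorem 2.) Let N ≥ 1 and let α ∈ (0, 1) satisfy ⌈(N+1)(1−α)⌉ ≤ N. Let Y_1, …, Y_{N+1} and Ŷ_1, …, Ŷ_{N+1} be real-valued random variables and let σ_1, …, σ_{N+1} be random variables that are almost surely strictly positive. Define the nonconformity scores S_i = (Y_i − Ŷ_i)² / σ_i for i = 1, …, N+1 and assume that S_1, …, S_{N+1} are exchangeable and almost surely pairwise distinct. Let q_α = S_{(⌈(N+1)(1−α)⌉)} be the ⌈(N+1)(1−α)⌉-th smallest of the calibration scores S_1, …, S_N (so q_α ≥ 0 almost surely). Then 1 − α ≤ ℙ(|Y_{N+1} − Ŷ_{N+1}| ≤ √(q_α · σ_{N+1})) ≤ 1 − α + 1/(N+1). -/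
open MeasureTheory ENNReal

lemma sorted_get_lt_iff : ∀ (l : List ℝ), l.Pairwise (· ≤ ·) → ∀ (x : ℝ) (i : ℕ) (h : i < l.length),
    (l.get ⟨i, h⟩ < x ↔ i < l.countP (fun y => decide (y < x))) := by
  intro l
  induction l with
  | nil => intro _ x i h; simp at h
  | cons a t ih =>
    intro hs x i h
    have hst : t.Pairwise (· ≤ ·) := hs.of_cons
    have hat : ∀ y ∈ t, a ≤ y := fun y hy => (List.rel_of_pairwise_cons hs) hy
    rw [List.countP_cons]
    by_cases hax : a < x
    · have hd : (if (fun y => decide (y < x)) a = true then 1 else 0) = 1 := by simp [hax]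
      rw [hd]
      cases i with
      | zero => simp [hax]
      | succ j =>
        have hj : j < t.length := by simpa using h
        have hiff := ih hst x j hj
        constructor
        · intro hlt
          have : j < t.countP (fun y => decide (y < x)) := hiff.mp (by simpa using hlt)
          omega
        · intro hlt
          have : t.get ⟨j, hj⟩ < x := hiff.mpr (by omega)
          simpa using this
    · have hct : t.countP (fun y => decide (y < x)) = 0 := by
        rw [List.countP_eq_zero]
        intro y hy
        simp only [decide_eq_true_eq]
        push_neg at hax ⊢
        exact le_trans hax (hat y hy)
      have hd : (if (fun y => decide (y < x)) a = true then 1 else 0) = 0 := by simp [hax]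
      rw [hd, hct]
      cases i with
      | zero => simpa using hax
      | succ j =>
        have hj : j < t.length := by simpa using h
        constructor
        · intro hlt
          have hmem : t.get ⟨j, hj⟩ ∈ t := t.get_mem _
          exact absurd (lt_of_le_of_lt (hat _ hmem) (by simpa using hlt)) hax
        · omega

lemma countP_ofFn {m : ℕ} (v : Fin m → ℝ) (p : ℝ → Bool) :
    (List.ofFn v).countP p = (Finset.univ.filter (fun i => p (v i) = true)).card := by
  induction m with
  | zero => simp
  | succ n ih =>
    rw [List.ofFn_succ, List.countP_cons, ih (fun i => v i.succ)]
    rw [Finset.card_filter, Finset.card_filter, Fin.sum_univ_succ]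
    simp [add_comm]

lemma orderStat_le_iff {m : ℕ} (v : Fin m → ℝ) (k : ℕ) (hk1 : 1 ≤ k) (hkm : k ≤ m) (x : ℝ) :
    x ≤ orderStat v k ↔ (Finset.univ.filter (fun i => v i < x)).card ≤ k - 1 := by
  set l := (List.ofFn v).insertionSort (· ≤ ·) with hl
  have hlen : l.length = m := by
    rw [hl, List.length_insertionSort, List.length_ofFn]
  have hsort : l.Pairwise (· ≤ ·) := List.pairwise_insertionSort _ _
  have hperm : List.Perm l (List.ofFn v) := List.perm_insertionSort _ _
  have hklen : k - 1 < l.length := by omega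
  have hget : orderStat v k = l.get ⟨k - 1, hklen⟩ := by
    rw [orderStat, ← hl]; exact l.getD_eq_get 0 ⟨k - 1, hklen⟩
  have hcount : l.countP (fun y => decide (y < x))
      = (Finset.univ.filter (fun i => v i < x)).card := by
    rw [hperm.countP_eq, countP_ofFn]
    congr 1
    ext i
    simp
  rw [hget, ← not_lt, sorted_get_lt_iff l hsort x (k-1) hklen, hcount, not_lt]

lemma orderStat_mem {m : ℕ} (v : Fin m → ℝ) (k : ℕ) (hk1 : 1 ≤ k) (hkm : k ≤ m) :
    ∃ i, orderStat v k = v i := by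
  set l := (List.ofFn v).insertionSort (· ≤ ·) with hl
  have hlen : l.length = m := by
    rw [hl, List.length_insertionSort, List.length_ofFn]
  have hperm : List.Perm l (List.ofFn v) := List.perm_insertionSort _ _
  have hklen : k - 1 < l.length := by omega
  have hget : orderStat v k = l.get ⟨k - 1, hklen⟩ := by
    rw [orderStat, ← hl]; exact l.getD_eq_get 0 ⟨k - 1, hklen⟩
  have hmem : l.get ⟨k - 1, hklen⟩ ∈ List.ofFn v := hperm.mem_iff.mp (l.get_mem _)
  rw [List.mem_ofFn] at hmem
  obtain ⟨i, hi⟩ := hmem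
  exact ⟨i, by rw [hget, ← hi]⟩

noncomputable def rk {n : ℕ} (v : Fin n → ℝ) (j : Fin n) : ℕ :=
  (Finset.univ.filter fun i => v i ≤ v j).card

lemma rk_pos {n : ℕ} (v : Fin n → ℝ) (j : Fin n) : 1 ≤ rk v j :=
  Finset.card_pos.mpr ⟨j, by simp [Finset.mem_filter]⟩

lemma rk_le {n : ℕ} (v : Fin n → ℝ) (j : Fin n) : rk v j ≤ n := by
  simpa [rk] using Finset.card_le_card (Finset.filter_subset _ (Finset.univ : Finset (Fin n)))

lemma rk_lt_rk {n : ℕ} {v : Fin n → ℝ} (j j' : Fin n) (h : v j < v j') :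
    rk v j < rk v j' := by
  apply Finset.card_lt_card
  constructor
  · intro i hi
    simp only [Finset.mem_filter, Finset.mem_univ, true_and] at hi ⊢
    exact hi.trans h.le
  · intro hsub
    have := hsub (by simp : j' ∈ Finset.univ.filter fun i => v i ≤ v j')
    simp only [Finset.mem_filter, Finset.mem_univ, true_and] at this
    exact absurd (lt_of_le_of_lt this h) (lt_irrefl _)

lemma rk_injective {n : ℕ} {v : Fin n → ℝ} (hv : Function.Injective v) :
    Function.Injective (rk v) := by
  intro j j' h
  rcases lt_trichotomy (v j) (v j') with hlt | heq | hgt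
  · exact absurd h (Nat.ne_of_lt (rk_lt_rk j j' hlt))
  · exact hv heq
  · exact absurd h.symm (Nat.ne_of_lt (rk_lt_rk j' j hgt))

lemma rk_surjective {n : ℕ} {v : Fin n → ℝ} (hv : Function.Injective v)
    (r : ℕ) (hr1 : 1 ≤ r) (hrn : r ≤ n) : ∃ j, rk v j = r := by
  have himage : Finset.univ.image (rk v) = Finset.Icc 1 n := by
    apply Finset.eq_of_subset_of_card_le
    · intro r hr
      simp only [Finset.mem_image, Finset.mem_univ, true_and] at hr
      obtain ⟨j, hj⟩ := hr
      rw [Finset.mem_Icc, ← hj]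
      exact ⟨rk_pos v j, rk_le v j⟩
    · rw [Finset.card_image_of_injective _ (rk_injective hv)]
      simp
  have : r ∈ Finset.univ.image (rk v) := by
    rw [himage, Finset.mem_Icc]; exact ⟨hr1, hrn⟩
  simpa using this

lemma rk_comp_perm {n : ℕ} (v : Fin n → ℝ) (π : Equiv.Perm (Fin n)) (j : Fin n) :
    rk (v ∘ π) j = rk v (π j) := by
  unfold rk
  apply Finset.card_bij (fun i _ => π i)
  · intro i hi
    simp only [Finset.mem_filter, Finset.mem_univ, true_and, Function.comp] at hi ⊢
    exact hi
  · intro i _ i' _ h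
    exact π.injective h
  · intro i hi
    refine ⟨π.symm i, ?_, by simp⟩
    simp only [Finset.mem_filter, Finset.mem_univ, true_and, Function.comp] at hi ⊢
    simpa using hi

lemma le_orderStat_iff_rk_le {N : ℕ} {v : Fin (N + 1) → ℝ} (hv : Function.Injective v)
    (k : ℕ) (hk1 : 1 ≤ k) (hkN : k ≤ N) :
    v (Fin.last N) ≤ orderStat (fun i : Fin N => v i.castSucc) k ↔ rk v (Fin.last N) ≤ k := by
  rw [orderStat_le_iff _ k hk1 hkN]
  have hrank : rk v (Fin.last N)
      = 1 + (Finset.univ.filter fun i : Fin N => v i.castSucc < v (Fin.last N)).card := by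
    rw [rk, Finset.card_filter, Finset.card_filter, Fin.sum_univ_castSucc]
    have hlast : (if v (Fin.last N) ≤ v (Fin.last N) then 1 else 0) = 1 := by simp
    rw [hlast, add_comm]
    congr 1
    apply Finset.sum_congr rfl
    intro i _
    have hne : v i.castSucc ≠ v (Fin.last N) := by
      intro h
      exact absurd (hv h) (Fin.ne_of_lt (Fin.castSucc_lt_last i))
    congr 1
    simp only [eq_iff_iff]
    exact ⟨fun h => lt_of_le_of_ne h hne, le_of_lt⟩
  omega

lemma rk_measurable {n : ℕ} (j : Fin n) : Measurable (fun v : Fin n → ℝ => rk v j) := by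
  have : (fun v : Fin n → ℝ => rk v j)
      = fun v => ∑ i : Fin n, if v i ≤ v j then 1 else 0 := by
    funext v
    rw [rk, Finset.card_filter]
  rw [this]
  apply Finset.measurable_sum
  intro i _
  exact Measurable.ite (measurableSet_le (measurable_pi_apply i) (measurable_pi_apply j))
    measurable_const measurable_const

/-- Conformal error bound, Theorem 2: Let `Y i` be the true values,
`Yhat i` the predicted means, and `σ i` a.s. strictly positive predicted scales,
for `i = 0, …, N` (index `Fin.last N` being the test point). Define the nonconformity
scores `S i = (Y i - Yhat i)² / σ i` and assume they are exchangeable and a.s.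
pairwise distinct. With `α ∈ (0,1)` such that `⌈(N+1)(1-α)⌉ ≤ N`, letting
`q_α = S_(⌈(N+1)(1-α)⌉)` be the corresponding order statistic of the `N` calibration
scores, we have
`1 - α ≤ ℙ(|Y_{N+1} - Yhat_{N+1}| ≤ √(q_α · σ_{N+1})) ≤ 1 - α + 1 / (N + 1)`. -/
theorem conformal_error_bound
    {Ω : Type*} [MeasurableSpace Ω] (P : Measure Ω) [IsProbabilityMeasure P]
    (N : ℕ) (hN : 1 ≤ N) (α : ℝ) (hα0 : 0 < α) (hα1 : α < 1)
    (hk : ⌈((N : ℝ) + 1) * (1 - α)⌉ ≤ (N : ℤ))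
    (Y Yhat σ : Fin (N + 1) → Ω → ℝ)
    (hmeasY : ∀ i, Measurable (Y i)) (hmeasYhat : ∀ i, Measurable (Yhat i))
    (hmeasσ : ∀ i, Measurable (σ i))
    (hσpos : ∀ i, ∀ᵐ ω ∂P, 0 < σ i ω)
    (S : Fin (N + 1) → Ω → ℝ)
    (hS : ∀ i ω, S i ω = (Y i ω - Yhat i ω) ^ 2 / σ i ω)
    (hexch : ∀ π : Equiv.Perm (Fin (N + 1)),
      Measure.map (fun ω => fun i => S (π i) ω) P
        = Measure.map (fun ω => fun i => S i ω) P)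
    (hdist : ∀ i j, i ≠ j → P {ω | S i ω = S j ω} = 0) :
    1 - α ≤ (P {ω | |Y (Fin.last N) ω - Yhat (Fin.last N) ω| ≤
        Real.sqrt (orderStat (fun i : Fin N => S i.castSucc ω)
            (⌈((N : ℝ) + 1) * (1 - α)⌉).toNat * σ (Fin.last N) ω)}).toReal ∧
      (P {ω | |Y (Fin.last N) ω - Yhat (Fin.last N) ω| ≤
        Real.sqrt (orderStat (fun i : Fin N => S i.castSucc ω)
            (⌈((N : ℝ) + 1) * (1 - α)⌉).toNat * σ (Fin.last N) ω)}).toReal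
        ≤ 1 - α + 1 / ((N : ℝ) + 1) := by
  -- the quantile index
  set k : ℕ := (⌈((N : ℝ) + 1) * (1 - α)⌉).toNat with hkdef
  have hceil_pos : (0 : ℤ) < ⌈((N : ℝ) + 1) * (1 - α)⌉ := by
    apply Int.ceil_pos.mpr
    have h1 : (0 : ℝ) < (N : ℝ) + 1 := by positivity
    have h2 : (0 : ℝ) < 1 - α := by linarith
    positivity
  have hkcast : (k : ℤ) = ⌈((N : ℝ) + 1) * (1 - α)⌉ := Int.toNat_of_nonneg hceil_pos.le
  have hk1 : 1 ≤ k := by omega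
  have hkN : k ≤ N := by omega
  -- measurability of scores
  have hSmeas : ∀ i, Measurable (S i) := by
    intro i
    have : S i = fun ω => (Y i ω - Yhat i ω) ^ 2 / σ i ω := funext (hS i)
    rw [this]
    exact (((hmeasY i).sub (hmeasYhat i)).pow_const 2).div (hmeasσ i)
  set T : Ω → Fin (N + 1) → ℝ := fun ω i => S i ω with hTdef
  have hT : Measurable T := measurable_pi_lambda _ hSmeas
  -- a.e. injectivity
  have h0 : P {ω | ¬ Function.Injective (T ω)} = 0 := by
    have hU : P (⋃ i, ⋃ j, ⋃ _h : i ≠ j, {ω | S i ω = S j ω}) = 0 :=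
      measure_iUnion_null fun i => measure_iUnion_null fun j =>
        measure_iUnion_null fun h => hdist i j h
    refine measure_mono_null ?_ hU
    intro ω hω
    simp only [Set.mem_setOf_eq, Function.Injective, not_forall] at hω
    obtain ⟨i, j, hij, hne⟩ := hω
    exact Set.mem_iUnion.mpr ⟨i, Set.mem_iUnion.mpr ⟨j, Set.mem_iUnion.mpr ⟨hne, hij⟩⟩⟩
  have hinj : ∀ᵐ ω ∂P, Function.Injective (T ω) := by
    rw [MeasureTheory.ae_iff]
    exact h0
  -- the rank events
  set E : Fin (N + 1) → ℕ → Set Ω := fun j r => {ω | rk (T ω) j = r} with hEdef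
  have hE : ∀ j r, MeasurableSet (E j r) := by
    intro j r
    exact ((rk_measurable j).comp hT) (measurableSet_singleton r)
  -- exchangeability: all ranks equidistributed
  have hexchE : ∀ (j : Fin (N + 1)) (r : ℕ), P (E (Fin.last N) r) = P (E j r) := by
    intro j r
    set π : Equiv.Perm (Fin (N + 1)) := Equiv.swap j (Fin.last N) with hπ
    set A : Set (Fin (N + 1) → ℝ) := {v | rk v j = r} with hA
    have hAmeas : MeasurableSet A := (rk_measurable j) (measurableSet_singleton r)
    set Tπ : Ω → Fin (N + 1) → ℝ := fun ω i => S (π i) ω with hTπ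
    have hTπmeas : Measurable Tπ := measurable_pi_lambda _ fun i => hSmeas (π i)
    have h1 : P (E j r) = Measure.map T P A := by
      rw [Measure.map_apply hT hAmeas]
      rfl
    have h2 : Measure.map T P A = Measure.map Tπ P A := by
      rw [hexch π]
    have h3 : Measure.map Tπ P A = P (Tπ ⁻¹' A) := Measure.map_apply hTπmeas hAmeas
    have h4 : Tπ ⁻¹' A = E (Fin.last N) r := by
      ext ω
      simp only [Set.mem_preimage, hA, Set.mem_setOf_eq, hEdef]
      have : Tπ ω = (T ω) ∘ π := rfl
      rw [this, rk_comp_perm (T ω) π j, Equiv.swap_apply_left]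
    rw [h1, h2, h3, h4]
  -- each rank value has probability 1/(N+1)
  have hunif : ∀ r : ℕ, 1 ≤ r → r ≤ N + 1 → P (E (Fin.last N) r) = 1 / ((N : ℝ≥0∞) + 1) := by
    intro r hr1 hr2
    have hdisj : Pairwise (Function.onFun (AEDisjoint P) fun j => E j r) := by
      intro j j' hjj'
      refine measure_mono_null ?_ h0
      intro ω hω
      obtain ⟨hω1, hω2⟩ := hω
      simp only [hEdef, Set.mem_setOf_eq] at hω1 hω2 ⊢
      intro hinjω
      exact hjj' (rk_injective hinjω (hω1.trans hω2.symm))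
    have hsum : P (⋃ j, E j r) = ∑ j, P (E j r) := by
      rw [measure_iUnion₀ hdisj (fun j => (hE j r).nullMeasurableSet), tsum_fintype]
    have hcover : P (⋃ j, E j r) = 1 := by
      refine le_antisymm prob_le_one ?_
      have huniv : (Set.univ : Set Ω)
          ⊆ (⋃ j, E j r) ∪ {ω | ¬ Function.Injective (T ω)} := by
        intro ω _
        by_cases hinjω : Function.Injective (T ω)
        · obtain ⟨j, hj⟩ := rk_surjective hinjω r hr1 hr2
          exact Or.inl (Set.mem_iUnion.mpr ⟨j, hj⟩)
        · exact Or.inr hinjω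
      calc (1 : ℝ≥0∞) = P Set.univ := (measure_univ).symm
        _ ≤ P ((⋃ j, E j r) ∪ {ω | ¬ Function.Injective (T ω)}) := measure_mono huniv
        _ ≤ P (⋃ j, E j r) + P {ω | ¬ Function.Injective (T ω)} := measure_union_le _ _
        _ = P (⋃ j, E j r) := by rw [h0, add_zero]
    have hconst : ∑ j, P (E j r) = ((N : ℝ≥0∞) + 1) * P (E (Fin.last N) r) := by
      have : ∀ j, P (E j r) = P (E (Fin.last N) r) := fun j => (hexchE j r).symm
      rw [Finset.sum_congr rfl (fun j _ => this j), Finset.sum_const, Finset.card_univ,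
        Fintype.card_fin, nsmul_eq_mul]
      push_cast
      ring
    have hmain : ((N : ℝ≥0∞) + 1) * P (E (Fin.last N) r) = 1 := by
      rw [← hconst, ← hsum, hcover]
    have hne : ((N : ℝ≥0∞) + 1) ≠ 0 := by
      simp
    have hnetop : ((N : ℝ≥0∞) + 1) ≠ ⊤ := by
      simp [ENNReal.add_ne_top]
    exact (ENNReal.eq_div_iff hne hnetop).mpr hmain
  -- probability of rank ≤ k
  have hrankle : P {ω | rk (T ω) (Fin.last N) ≤ k} = (k : ℝ≥0∞) / ((N : ℝ≥0∞) + 1) := by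
    have hset : {ω | rk (T ω) (Fin.last N) ≤ k}
        = ⋃ r ∈ Finset.Icc 1 k, E (Fin.last N) r := by
      ext ω
      simp only [Set.mem_setOf_eq, Set.mem_iUnion, hEdef, Finset.mem_Icc]
      constructor
      · intro h
        exact ⟨rk (T ω) (Fin.last N), ⟨rk_pos _ _, h⟩, rfl⟩
      · rintro ⟨r, ⟨_, hr2⟩, hr⟩
        omega
    have hpd : (↑(Finset.Icc 1 k) : Set ℕ).PairwiseDisjoint (fun r => E (Fin.last N) r) := by
      intro r _ r' _ hrr'
      apply Set.disjoint_left.mpr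
      intro ω hω hω'
      simp only [hEdef, Set.mem_setOf_eq] at hω hω'
      exact hrr' (hω.symm.trans hω')
    rw [hset, measure_biUnion_finset hpd (fun r _ => hE _ r)]
    have hval : ∀ r ∈ Finset.Icc 1 k, P (E (Fin.last N) r) = 1 / ((N : ℝ≥0∞) + 1) := by
      intro r hr
      rw [Finset.mem_Icc] at hr
      exact hunif r hr.1 (by omega)
    rw [Finset.sum_congr rfl hval, Finset.sum_const, Nat.card_Icc]
    simp only [Nat.add_sub_cancel, nsmul_eq_mul]
    rw [mul_one_div]
  -- the stated event a.e. equals the rank event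
  have hae : P {ω | |Y (Fin.last N) ω - Yhat (Fin.last N) ω| ≤
        Real.sqrt (orderStat (fun i : Fin N => S i.castSucc ω)
            (⌈((N : ℝ) + 1) * (1 - α)⌉).toNat * σ (Fin.last N) ω)}
      = P {ω | rk (T ω) (Fin.last N) ≤ k} := by
    apply measure_congr
    have hσae : ∀ᵐ ω ∂P, ∀ i, 0 < σ i ω := ae_all_iff.mpr hσpos
    filter_upwards [hinj, hσae] with ω hω hσω
    simp only [Set.mem_setOf_eq, eq_iff_iff]
    set q : ℝ := orderStat (fun i : Fin N => S i.castSucc ω) k with hqdef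
    have hq0 : 0 ≤ q := by
      obtain ⟨i, hi⟩ := orderStat_mem (fun i : Fin N => S i.castSucc ω) k hk1 hkN
      rw [hqdef, hi, hS]
      exact div_nonneg (sq_nonneg _) (hσω _).le
    have hσl : 0 < σ (Fin.last N) ω := hσω _
    have hqσ : 0 ≤ q * σ (Fin.last N) ω := mul_nonneg hq0 hσl.le
    have hstep1 : |Y (Fin.last N) ω - Yhat (Fin.last N) ω|
        ≤ Real.sqrt (q * σ (Fin.last N) ω)
        ↔ (Y (Fin.last N) ω - Yhat (Fin.last N) ω) ^ 2 ≤ q * σ (Fin.last N) ω := by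
      rw [← Real.sqrt_sq_eq_abs, Real.sqrt_le_sqrt_iff hqσ]
    have hstep2 : (Y (Fin.last N) ω - Yhat (Fin.last N) ω) ^ 2 ≤ q * σ (Fin.last N) ω
        ↔ S (Fin.last N) ω ≤ q := by
      rw [hS, div_le_iff₀ hσl]
    have hstep3 : S (Fin.last N) ω ≤ q ↔ rk (T ω) (Fin.last N) ≤ k := by
      have hcal : (fun i : Fin N => S i.castSucc ω) = fun i : Fin N => T ω i.castSucc := rfl
      rw [hqdef, hcal]
      exact le_orderStat_iff_rk_le hω k hk1 hkN
    show |Y (Fin.last N) ω - Yhat (Fin.last N) ω| ≤ Real.sqrt (q * σ (Fin.last N) ω)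
      ↔ rk (T ω) (Fin.last N) ≤ k
    rw [hstep1, hstep2, hstep3]
  rw [hae, hrankle]
  -- final arithmetic
  have hNpos : (0 : ℝ) < (N : ℝ) + 1 := by positivity
  have htR : ((k : ℝ≥0∞) / ((N : ℝ≥0∞) + 1)).toReal = (k : ℝ) / ((N : ℝ) + 1) := by
    have hcc : ((N : ℝ≥0∞) + 1) = ((N + 1 : ℕ) : ℝ≥0∞) := by push_cast; ring
    rw [hcc, ENNReal.toReal_div, ENNReal.toReal_natCast, ENNReal.toReal_natCast]
    push_cast
    ring
  rw [htR]
  have hkreal : ((k : ℝ) : ℝ) = ((⌈((N : ℝ) + 1) * (1 - α)⌉ : ℤ) : ℝ) := by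
    exact_mod_cast congrArg (fun z : ℤ => (z : ℝ)) hkcast
  have hlow : ((N : ℝ) + 1) * (1 - α) ≤ (k : ℝ) := by
    rw [hkreal]
    exact Int.le_ceil _
  have hhigh : (k : ℝ) < ((N : ℝ) + 1) * (1 - α) + 1 := by
    rw [hkreal]
    exact Int.ceil_lt_add_one _
  constructor
  · rw [le_div_iff₀ hNpos]
    nlinarith
  · rw [div_le_iff₀ hNpos]
    have : (1 - α + 1 / ((N : ℝ) + 1)) * ((N : ℝ) + 1)
        = ((N : ℝ) + 1) * (1 - α) + 1 := by
      field_simp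
    rw [this]
    linarith
end
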